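/- Fix n ≥ 1 and consider pairs (f₀, f₁) of maps f₀, f₁ : ℝⁿ → ℝ^{n+1} (components indexed 0, 1, …, n) with f₀ C¹ and f₀⁰ = 0; write F₀ := (f₀¹, …, f₀ⁿ) : ℝⁿ → ℝⁿ. Define (f̃₀, f̃₁) ⋆ (f₀, f₁) := ( f̃₀ + f₀∘(id + F̃₀), f̃₁ + (1 + f̃₁⁰)·f₁∘(id + F̃₀) + Σ_{i=1}^{n} f̃₁ⁱ·(∂_i f₀)∘(id + F̃₀) ). Then: (i) if sup_{x∈ℝⁿ} of the operator norm of the n×n matrix (∂_i f₀ʲ(x))_{1≤i,j≤n} is < 1, then for every f₁ there is a unique g₁ : ℝⁿ → ℝ^{n+1} with (f₀, f₁) = (0, g₁) ⋆ (f₀, 0); explicitly g₁⁰ = f₁⁰ and the spatial components solve g₁ʲ + Σᵢ g₁ⁱ ∂_i f₀ʲ = f₁ʲ pointwise; (ii) if id + F₀ is a bijection of ℝⁿ, then for every f₁ there is a unique g₁ with (f₀, f₁) = (f₀, 0) ⋆ (0, g₁), namely g₁ = f₁∘(id + F₀)^{−1}. Hence every pair (f₀, f₁) factors both as an element of the subgroup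 generated by pairs (0, ·) followed by one generated by pairs (·, 0) and in the reverse order (Lemma 3.3: 𝒢 = 𝒢₁ ⋆ 𝒢₀ = 𝒢₀ ⋆ 𝒢₁). -/

import Mathlib

noncomputable section

/-- First-order Cauchy data: a map from `ℝⁿ` to `ℝ^{n+1}` (components indexed `0,…,n`). -/
abbrev Dat (n : ℕ) := (Fin n → ℝ) → (Fin (n + 1) → ℝ)

/-- Partial derivative `∂_i` of `f : ℝⁿ → ℝ^{n+1}`. -/
def pdd {n : ℕ} (i : Fin n) (f : Dat n) (x : Fin n → ℝ) : Fin (n + 1) → ℝ :=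
  fderiv ℝ f x (Pi.single i 1)

/-- The spatial components `F₀ = (f₀¹, …, f₀ⁿ)`. -/
def spat {n : ℕ} (f : Dat n) (x : Fin n → ℝ) : Fin n → ℝ := fun i => f x i.succ

/-- The group operation `(f̃₀, f̃₁) ⋆ (f₀, f₁)` on pairs of Cauchy data. -/
def starOp {n : ℕ} (p q : Dat n × Dat n) : Dat n × Dat n :=
  (fun x => p.1 x + q.1 (x + spat p.1 x),
   fun x => p.2 x + (1 + p.2 x 0) • q.2 (x + spat p.1 x)
     + ∑ i : Fin n, p.2 x i.succ • pdd i q.1 (x + spat p.1 x))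

/-- The `0`-component of `∂_i f₀` vanishes when `f₀⁰ = 0`. -/
lemma pdd_zero {n : ℕ} (f₀ : Dat n) (hf₀ : ContDiff ℝ 1 f₀) (hf₀0 : ∀ x, f₀ x 0 = 0)
    (i : Fin n) (x : Fin n → ℝ) : pdd i f₀ x 0 = 0 := by
  have hd : DifferentiableAt ℝ f₀ x := (hf₀.differentiable one_ne_zero) x
  have h1 : HasFDerivAt (fun y => f₀ y 0)
      ((ContinuousLinearMap.proj (R := ℝ) (φ := fun _ : Fin (n+1) => ℝ) 0).comp
        (fderiv ℝ f₀ x)) x :=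
    (ContinuousLinearMap.proj (R := ℝ) (φ := fun _ : Fin (n+1) => ℝ)
      0).hasFDerivAt.comp x hd.hasFDerivAt
  have h2 : HasFDerivAt (fun y => f₀ y 0) (0 : (Fin n → ℝ) →L[ℝ] ℝ) x := by
    simpa [hf₀0] using hasFDerivAt_const (0 : ℝ) x
  have h3 := h1.unique h2
  have := congrFun (congrArg (fun L : (Fin n → ℝ) →L[ℝ] ℝ => (L : (Fin n → ℝ) → ℝ))
    h3) (Pi.single i 1)
  simpa [pdd] using this

/-- Under the norm bound, the determinant of `1 + M` is a unit. -/
lemma det_unit {n : ℕ} (f₀ : Dat n) {c : ℝ} (hc : c < 1)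
    (hb : ∀ x : Fin n → ℝ,
      ‖LinearMap.toContinuousLinearMap
          (Matrix.toLin' (Matrix.of fun i j : Fin n => pdd i f₀ x j.succ))‖ ≤ c)
    (x : Fin n → ℝ) :
    IsUnit (1 + Matrix.of fun i j : Fin n => pdd i f₀ x j.succ).det := by
  set M := Matrix.of fun i j : Fin n => pdd i f₀ x j.succ with hM
  set T := LinearMap.toContinuousLinearMap (Matrix.toLin' M) with hT
  have hnorm : ‖-T‖ < 1 := by
    rw [norm_neg]; exact (hb x).trans_lt hc
  have hu : IsUnit ((1 : (Fin n → ℝ) →L[ℝ] (Fin n → ℝ)) + T) := by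
    have := isUnit_one_sub_of_norm_lt_one hnorm
    simpa [sub_neg_eq_add] using this
  obtain ⟨u, huv⟩ := hu
  have hbij : Function.Bijective ((1 : (Fin n → ℝ) →L[ℝ] (Fin n → ℝ)) + T) := by
    rw [← huv]
    constructor
    · intro a b hab
      have h1 : ((↑u⁻¹ * ↑u : (Fin n → ℝ) →L[ℝ] (Fin n → ℝ))) a
          = ((↑u⁻¹ * ↑u : (Fin n → ℝ) →L[ℝ] (Fin n → ℝ))) b := by
        simp only [ContinuousLinearMap.mul_apply]; rw [hab]
      rwa [u.inv_mul, ContinuousLinearMap.one_apply, ContinuousLinearMap.one_apply] at h1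
    · intro b
      refine ⟨(↑u⁻¹ : (Fin n → ℝ) →L[ℝ] (Fin n → ℝ)) b, ?_⟩
      have h1 : ((↑u * ↑u⁻¹ : (Fin n → ℝ) →L[ℝ] (Fin n → ℝ))) b
          = (1 : (Fin n → ℝ) →L[ℝ] (Fin n → ℝ)) b := by rw [u.mul_inv]
      rwa [ContinuousLinearMap.mul_apply, ContinuousLinearMap.one_apply] at h1
  have hcoe : ⇑(Matrix.toLin' (1 + M)) = ⇑((1 : (Fin n → ℝ) →L[ℝ] (Fin n → ℝ)) + T) := by
    funext v
    simp [Matrix.toLin'_apply, Matrix.add_mulVec, Matrix.one_mulVec, hT,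
      ContinuousLinearMap.add_apply, ContinuousLinearMap.one_apply]
  have hbij2 : Function.Bijective (Matrix.toLin' (1 + M)) := by rw [hcoe]; exact hbij
  have hunit : IsUnit (Matrix.toLin' (1 + M)) := (Module.End.isUnit_iff _).mpr hbij2
  have := LinearMap.isUnit_det _ hunit
  rwa [LinearMap.det_toLin'] at this

/-- The matrix `(1 + M)ᵀ` governing the spatial components. -/
def matA {n : ℕ} (f₀ : Dat n) (x : Fin n → ℝ) : Matrix (Fin n) (Fin n) ℝ :=
  ((1 + Matrix.of fun i j : Fin n => pdd i f₀ x j.succ)).transpose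

lemma matA_mulVec {n : ℕ} (f₀ : Dat n) (x : Fin n → ℝ) (v : Fin n → ℝ) (j : Fin n) :
    (matA f₀ x).mulVec v j = v j + ∑ i : Fin n, v i * pdd i f₀ x j.succ := by
  simp only [matA, Matrix.mulVec, dotProduct, Matrix.transpose_apply, Matrix.add_apply,
    Matrix.one_apply, add_mul, Finset.sum_add_distrib, ite_mul, one_mul, zero_mul,
    Matrix.of_apply]
  rw [Finset.sum_ite_eq' Finset.univ j v]
  simp [mul_comm]

lemma matA_det {n : ℕ} (f₀ : Dat n) {c : ℝ} (hc : c < 1)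
    (hb : ∀ x : Fin n → ℝ,
      ‖LinearMap.toContinuousLinearMap
          (Matrix.toLin' (Matrix.of fun i j : Fin n => pdd i f₀ x j.succ))‖ ≤ c)
    (x : Fin n → ℝ) : IsUnit (matA f₀ x).det := by
  rw [matA, Matrix.det_transpose]
  exact det_unit f₀ hc hb x

theorem stmt18 (n : ℕ) (hn : 1 ≤ n) (f₀ : Dat n)
    (hf₀ : ContDiff ℝ 1 f₀) (hf₀0 : ∀ x, f₀ x 0 = 0) :
    ((∃ c < (1 : ℝ), ∀ x : Fin n → ℝ,
        ‖LinearMap.toContinuousLinearMap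
            (Matrix.toLin' (Matrix.of fun i j : Fin n => pdd i f₀ x j.succ))‖ ≤ c) →
      ∀ f₁ : Dat n,
        (∃! g₁ : Dat n, starOp ((0 : Dat n), g₁) (f₀, (0 : Dat n)) = (f₀, f₁)) ∧
        (∀ g₁ : Dat n, starOp ((0 : Dat n), g₁) (f₀, (0 : Dat n)) = (f₀, f₁) →
          ∀ x : Fin n → ℝ, g₁ x 0 = f₁ x 0 ∧
            ∀ j : Fin n,
              g₁ x j.succ + ∑ i : Fin n, g₁ x i.succ * pdd i f₀ x j.succ = f₁ x j.succ)) ∧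
    (Function.Bijective (fun x : Fin n → ℝ => x + spat f₀ x) →
      ∀ f₁ : Dat n,
        starOp (f₀, (0 : Dat n))
            ((0 : Dat n), fun x => f₁ (Function.invFun (fun y : Fin n → ℝ => y + spat f₀ y) x))
          = (f₀, f₁) ∧
        (∀ g₁ : Dat n, starOp (f₀, (0 : Dat n)) ((0 : Dat n), g₁) = (f₀, f₁) →
          g₁ = fun x => f₁ (Function.invFun (fun y : Fin n → ℝ => y + spat f₀ y) x))) := by
  have hsz : ∀ x : Fin n → ℝ, x + spat (0 : Dat n) x = x := fun x => by
    funext i; simp [spat]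
  have hstar1 : ∀ g₁ : Dat n, starOp ((0 : Dat n), g₁) (f₀, (0 : Dat n))
      = (f₀, fun x => g₁ x + ∑ i : Fin n, g₁ x i.succ • pdd i f₀ x) := by
    intro g₁
    simp only [starOp, Prod.mk.injEq]
    constructor
    · funext x; simp [hsz]
    · funext x; simp [hsz]
  have hp0 := pdd_zero f₀ hf₀ hf₀0
  constructor
  · rintro ⟨c, hc, hb⟩ f₁
    have hdetA : ∀ x, IsUnit (matA f₀ x).det := matA_det f₀ hc hb
    -- extraction of pointwise equations from the group equation
    have hext : ∀ g : Dat n, starOp ((0 : Dat n), g) (f₀, (0 : Dat n)) = (f₀, f₁) →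
        ∀ x : Fin n → ℝ, g x 0 = f₁ x 0 ∧
          ∀ j : Fin n, g x j.succ + ∑ i : Fin n, g x i.succ * pdd i f₀ x j.succ
            = f₁ x j.succ := by
      intro g hg x
      rw [hstar1] at hg
      have h2 : (fun x => g x + ∑ i : Fin n, g x i.succ • pdd i f₀ x) = f₁ :=
        ((Prod.mk.injEq _ _ _ _).mp hg).2
      have hcomp : ∀ k : Fin (n+1), g x k + ∑ i : Fin n, g x i.succ * pdd i f₀ x k
          = f₁ x k := by
        intro k
        have := congrFun (congrFun h2 x) k
        simpa [Finset.sum_apply] using this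
      refine ⟨?_, fun j => hcomp j.succ⟩
      have := hcomp 0
      simpa [hp0] using this
    refine ⟨⟨fun x => Fin.cons (f₁ x 0)
        ((matA f₀ x)⁻¹.mulVec (fun j => f₁ x j.succ)), ?_, ?_⟩, hext⟩
    · -- existence
      show starOp ((0 : Dat n), fun x => Fin.cons (f₁ x 0)
          ((matA f₀ x)⁻¹.mulVec (fun j => f₁ x j.succ))) (f₀, (0 : Dat n)) = (f₀, f₁)
      rw [hstar1]
      simp only [Prod.mk.injEq]
      refine ⟨trivial, ?_⟩
      funext x k
      refine Fin.cases ?_ ?_ k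
      · simp [hp0, Finset.sum_apply]
      · intro j
        have hmul : (matA f₀ x).mulVec ((matA f₀ x)⁻¹.mulVec (fun j => f₁ x j.succ))
            = fun j => f₁ x j.succ := by
          rw [Matrix.mulVec_mulVec, Matrix.mul_nonsing_inv _ (hdetA x), Matrix.one_mulVec]
        have h := congrFun hmul j
        rw [matA_mulVec] at h
        simpa [Finset.sum_apply] using h
    · -- uniqueness
      intro g hg
      have h := hext g hg
      funext x
      have hv : (matA f₀ x).mulVec (fun j => g x j.succ) = fun j => f₁ x j.succ := by
        funext j; rw [matA_mulVec]; exact (h x).2 j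
      have hvv : (fun j => g x j.succ)
          = (matA f₀ x)⁻¹.mulVec (fun j => f₁ x j.succ) := by
        rw [← hv, Matrix.mulVec_mulVec, Matrix.nonsing_inv_mul _ (hdetA x),
          Matrix.one_mulVec]
      funext k
      refine Fin.cases ?_ ?_ k
      · simpa using (h x).1
      · intro j
        simpa using congrFun hvv j
  · intro hbij f₁
    have hstar2 : ∀ g : Dat n, starOp (f₀, (0 : Dat n)) ((0 : Dat n), g)
        = (f₀, fun x => g (x + spat f₀ x)) := by
      intro g
      simp only [starOp, Prod.mk.injEq]
      exact ⟨by funext x; simp, by funext x; simp⟩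
    have hli : ∀ x : Fin n → ℝ,
        Function.invFun (fun y : Fin n → ℝ => y + spat f₀ y) (x + spat f₀ x) = x :=
      fun x => Function.leftInverse_invFun hbij.injective x
    have hri : ∀ y : Fin n → ℝ,
        Function.invFun (fun y : Fin n → ℝ => y + spat f₀ y) y
          + spat f₀ (Function.invFun (fun y : Fin n → ℝ => y + spat f₀ y) y) = y :=
      fun y => Function.rightInverse_invFun hbij.surjective y
    constructor
    · rw [hstar2]
      simp only [Prod.mk.injEq]
      refine ⟨trivial, ?_⟩
      funext x
      exact congrArg f₁ (hli x)
    · intro g hg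
      rw [hstar2] at hg
      have h2 := ((Prod.mk.injEq _ _ _ _).mp hg).2
      funext y
      have := congrFun h2 (Function.invFun (fun y : Fin n → ℝ => y + spat f₀ y) y)
      rw [hri y] at this
      exact this
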